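/- If f = f₁ + ρ f₂ belongs to E^ω with f₁, f₂ analytic near the origin of ℝ³ and f is nonvanishing on a neighbourhood of the origin, then 1/f belongs to E^ω (on a possibly smaller neighbourhood). -/

import Mathlib

open scoped Topology

def Eomega (f : EuclideanSpace ℝ (Fin 3) → ℝ) : Prop :=
  ∃ f₁ f₂ : EuclideanSpace ℝ (Fin 3) → ℝ,
    AnalyticAt ℝ f₁ 0 ∧ AnalyticAt ℝ f₂ 0 ∧
    ∀ᶠ x in 𝓝 (0 : EuclideanSpace ℝ (Fin 3)), f x = f₁ x + ‖x‖ * f₂ x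

lemma analyticAt_normSq :
    AnalyticAt ℝ (fun x : EuclideanSpace ℝ (Fin 3) => ‖x‖ ^ 2) 0 := by
  have h1 : AnalyticAt ℝ (fun p : EuclideanSpace ℝ (Fin 3) × EuclideanSpace ℝ (Fin 3) =>
      (innerSL ℝ p.1) p.2) (0, 0) := (innerSL ℝ).analyticAt_bilinear (0, 0)
  have h2 : AnalyticAt ℝ (fun x : EuclideanSpace ℝ (Fin 3) => (x, x)) 0 :=
    analyticAt_id.prod analyticAt_id
  have := AnalyticAt.comp (f := fun x : EuclideanSpace ℝ (Fin 3) => (x, x)) h1 h2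
  refine this.congr ?_
  filter_upwards with x
  simp only [Function.comp_apply, innerSL_apply_apply, real_inner_self_eq_norm_sq]

theorem Eomega_inv (f : EuclideanSpace ℝ (Fin 3) → ℝ)
    (hf : Eomega f)
    (hne : ∀ᶠ x in 𝓝 (0 : EuclideanSpace ℝ (Fin 3)), f x ≠ 0) :
    Eomega (fun x => (f x)⁻¹) := by
  obtain ⟨f₁, f₂, h₁, h₂, heq⟩ := hf
  set g : EuclideanSpace ℝ (Fin 3) → ℝ := fun x => f₁ x ^ 2 - ‖x‖ ^ 2 * f₂ x ^ 2 with hg_def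
  have hg : AnalyticAt ℝ g 0 := by
    exact (h₁.pow 2).sub (analyticAt_normSq.mul (h₂.pow 2))
  have hf0 : f 0 ≠ 0 := hne.self_of_nhds
  have hfeq0 : f 0 = f₁ 0 := by
    have := heq.self_of_nhds
    simpa using this
  have hg0 : g 0 ≠ 0 := by
    simp only [hg_def]
    simp only [norm_zero]
    rw [← hfeq0]
    simpa using pow_ne_zero 2 hf0
  have hgne : ∀ᶠ x in 𝓝 (0 : EuclideanSpace ℝ (Fin 3)), g x ≠ 0 :=
    hg.continuousAt.eventually_ne hg0
  refine ⟨fun x => f₁ x / g x, fun x => -f₂ x / g x, h₁.div hg hg0,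
    (h₂.neg).div hg hg0, ?_⟩
  filter_upwards [heq, hne, hgne] with x hx hfx hgx
  have key : f x * (f₁ x / g x + ‖x‖ * (-f₂ x / g x)) = 1 := by
    rw [hx]
    field_simp [hg_def]
    ring
  exact (eq_inv_of_mul_eq_one_right key).symm ▸ rfl
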